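/- The set of almost-Riordan arrays forms a group under the product (a,g,f)·(b,u,v) = ((a,g,f)·b, g·(u∘f), v∘f), with identity (1,1,x) and inverse (a,g,f)^{-1} = ((1,−g,f)^{-1}·a, 1/(g∘f̄), f̄). -/

import Mathlib

open PowerSeries Finset

/-- Shift: `shift h = (h - h₀)/x`, i.e. the series with coefficients `h₁, h₂, …`. -/
noncomputable def shift (h : PowerSeries ℤ) : PowerSeries ℤ :=
  PowerSeries.mk fun n => coeff (n + 1) h

/-- Composition `h ∘ f` of formal power series (intended for `f` with zero constant term,
in which case `coeff n (f ^ k) = 0` for `k > n`). -/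
noncomputable def comp (h f : PowerSeries ℤ) : PowerSeries ℤ :=
  PowerSeries.mk fun n => ∑ k ∈ Finset.range (n + 1), coeff k h * coeff n (f ^ k)

/-- Action of an almost-Riordan array `(a,g,f)` on a power series `b`:
`(a,g,f)·b = b₀ a + x g b̃(f)` where `b̃ = (b - b₀)/x`. -/
noncomputable def act (a g f b : PowerSeries ℤ) : PowerSeries ℤ :=
  C (coeff 0 b) * a + X * g * comp (shift b) f

/-- Product of almost-Riordan arrays: `(a,g,f)·(b,u,v) = ((a,g,f)·b, g·u(f), v(f))`. -/
noncomputable def arMul (t s : PowerSeries ℤ × PowerSeries ℤ × PowerSeries ℤ) :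
    PowerSeries ℤ × PowerSeries ℤ × PowerSeries ℤ :=
  (act t.1 t.2.1 t.2.2 s.1, t.2.1 * comp s.2.1 t.2.2, comp s.2.2 t.2.2)

/-- `(a,g,f)` is an almost-Riordan array: `a₀ = 1`, `g₀ = 1`, `f₀ = 0`, `f₁ = 1`. -/
def isAR (t : PowerSeries ℤ × PowerSeries ℤ × PowerSeries ℤ) : Prop :=
  coeff 0 t.1 = 1 ∧ coeff 0 t.2.1 = 1 ∧ coeff 0 t.2.2 = 0 ∧ coeff 1 t.2.2 = 1

lemma coeff_comp (h f : PowerSeries ℤ) (n : ℕ) :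
    coeff n (comp h f) = ∑ k ∈ Finset.range (n + 1), coeff k h * coeff n (f ^ k) :=
  coeff_mk _ _

lemma coeff_pow_zero {f : PowerSeries ℤ} (hf : coeff 0 f = 0) {n k : ℕ} (h : n < k) :
    coeff n (f ^ k) = 0 := by
  have hd : (X : PowerSeries ℤ) ^ k ∣ f ^ k :=
    pow_dvd_pow_of_dvd (X_dvd_iff.mpr (by rwa [← coeff_zero_eq_constantCoeff_apply])) k
  exact X_pow_dvd_iff.mp hd n h

lemma coeff_comp_eval₂ {f : PowerSeries ℤ} (hf : coeff 0 f = 0) (h : PowerSeries ℤ)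
    {n N : ℕ} (hn : n < N) :
    coeff n (comp h f) = coeff n (Polynomial.eval₂ (C (R := ℤ)) f (trunc N h)) := by
  have hdeg : (trunc N h).natDegree < N := by
    rcases eq_or_ne (trunc N h) 0 with h0 | h0
    · simp only [h0, Polynomial.natDegree_zero]; omega
    · exact (Polynomial.natDegree_lt_iff_degree_lt h0).mpr
        (by exact_mod_cast degree_trunc_lt h N)
  rw [Polynomial.eval₂_eq_sum_range' (C (R := ℤ)) hdeg f, coeff_comp]
  rw [map_sum]
  have key : ∀ k ∈ Finset.range N,
      coeff n ((C (R := ℤ)) ((trunc N h).coeff k) * f ^ k) = coeff k h * coeff n (f ^ k) := by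
    intro k hk
    rw [coeff_C_mul, coeff_trunc, if_pos (mem_range.mp hk)]
  rw [Finset.sum_congr rfl key]
  refine Finset.sum_subset ?_ ?_
  · intro k hk
    exact mem_range.mpr (lt_of_lt_of_le (mem_range.mp hk) hn)
  · intro k _ hk
    rw [coeff_pow_zero hf (by simp only [mem_range, not_lt] at hk; omega), mul_zero]


lemma coeff_eval₂_zero {f : PowerSeries ℤ} (hf : coeff 0 f = 0) {P : Polynomial ℤ}
    {n N : ℕ} (hn : n < N) (hP : ∀ j < N, P.coeff j = 0) :
    coeff n (Polynomial.eval₂ (C (R := ℤ)) f P) = 0 := by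
  rw [Polynomial.eval₂_eq_sum, Polynomial.sum, map_sum]
  refine Finset.sum_eq_zero fun k _ => ?_
  rcases lt_or_ge k N with hk | hk
  · rw [hP k hk, map_zero, zero_mul, map_zero]
  · rw [coeff_C_mul, coeff_pow_zero hf (by omega), mul_zero]

/-- two series agreeing in low coefficients have products agreeing there -/
lemma coeff_mul_congr {u u' v v' : PowerSeries ℤ} {n : ℕ}
    (hu : ∀ i ≤ n, coeff i u = coeff i u')
    (hv : ∀ i ≤ n, coeff i v = coeff i v') :
    coeff n (u * v) = coeff n (u' * v') := by
  rw [coeff_mul, coeff_mul]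
  refine Finset.sum_congr rfl fun p hp => ?_
  have h := Finset.HasAntidiagonal.mem_antidiagonal.mp hp
  rw [hu p.1 (by omega), hv p.2 (by omega)]

lemma comp_one (f : PowerSeries ℤ) : comp 1 f = 1 := by
  ext n
  rw [coeff_comp]
  rcases Nat.eq_zero_or_pos n with rfl | hn
  · simp
  · rw [Finset.sum_eq_single 0]
    · simp [coeff_one, Nat.pos_iff_ne_zero.mp hn]
    · intro k _ hk
      rw [coeff_one, if_neg hk, zero_mul]
    · simp
lemma comp_add (h₁ h₂ f : PowerSeries ℤ) : comp (h₁ + h₂) f = comp h₁ f + comp h₂ f := by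
  ext n
  simp only [coeff_comp, map_add, add_mul, Finset.sum_add_distrib]

lemma comp_C_mul (c : ℤ) (h f : PowerSeries ℤ) : comp (C c * h) f = C c * comp h f := by
  ext n
  simp only [coeff_comp, coeff_C_mul, Finset.mul_sum, mul_assoc]

lemma comp_neg (h f : PowerSeries ℤ) : comp (-h) f = - comp h f := by
  ext n
  simp only [coeff_comp, map_neg, neg_mul, Finset.sum_neg_distrib]

lemma comp_mul {f : PowerSeries ℤ} (hf : coeff 0 f = 0) (h₁ h₂ : PowerSeries ℤ) :
    comp (h₁ * h₂) f = comp h₁ f * comp h₂ f := by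
  ext n
  rw [coeff_comp_eval₂ hf _ (Nat.lt_succ_self n)]
  have step1 : coeff n (Polynomial.eval₂ (C (R := ℤ)) f (trunc (n+1) (h₁ * h₂)))
      = coeff n (Polynomial.eval₂ (C (R := ℤ)) f (trunc (n+1) h₁ * trunc (n+1) h₂)) := by
    have hdiff : ∀ j < n + 1,
        (trunc (n+1) (h₁ * h₂) - trunc (n+1) h₁ * trunc (n+1) h₂).coeff j = 0 := by
      intro j hj
      rw [Polynomial.coeff_sub, Polynomial.coeff_mul, coeff_trunc, if_pos hj, coeff_mul]
      rw [sub_eq_zero]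
      refine Finset.sum_congr rfl fun p hp => ?_
      have h := Finset.HasAntidiagonal.mem_antidiagonal.mp hp
      rw [coeff_trunc, coeff_trunc, if_pos (by omega), if_pos (by omega)]
    have := coeff_eval₂_zero hf (Nat.lt_succ_self n) hdiff
    rw [Polynomial.eval₂_sub, map_sub, sub_eq_zero] at this
    exact this
  rw [step1, Polynomial.eval₂_mul]
  refine coeff_mul_congr ?_ ?_ <;> intro i hi <;>
    exact (coeff_comp_eval₂ hf _ (by omega)).symm

lemma comp_pow {f : PowerSeries ℤ} (hf : coeff 0 f = 0) (h : PowerSeries ℤ) (k : ℕ) :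
    comp (h ^ k) f = comp h f ^ k := by
  induction k with
  | zero => simpa using comp_one f
  | succ k ih => rw [pow_succ, pow_succ, comp_mul hf, ih]


lemma comp_X (h : PowerSeries ℤ) : comp h X = h := by
  ext n
  rw [coeff_comp, Finset.sum_eq_single n]
  · rw [← pow_one (X : PowerSeries ℤ), ← pow_mul, one_mul, coeff_X_pow, if_pos rfl, mul_one]
  · intro k hk hkn
    rw [← pow_one (X : PowerSeries ℤ), ← pow_mul, one_mul, coeff_X_pow, if_neg (by omega),
      mul_zero]
  · intro hn; exact absurd (mem_range.mpr (Nat.lt_succ_self n)) hn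

lemma X_comp {f : PowerSeries ℤ} (hf : coeff 0 f = 0) : comp X f = f := by
  ext n
  rw [coeff_comp, Finset.sum_eq_single 1]
  · simp
  · intro k hk hk1
    rw [coeff_X, if_neg hk1, zero_mul]
  · intro hn
    simp only [mem_range, not_lt] at hn
    have hn0 : n = 0 := by omega
    subst hn0
    simp [hf]

lemma coeff_zero_comp (h f : PowerSeries ℤ) : coeff 0 (comp h f) = coeff 0 h := by
  rw [coeff_comp]; simp

lemma coeff_one_comp {f : PowerSeries ℤ} (h : PowerSeries ℤ) :
    coeff 1 (comp h f) = coeff 1 h * coeff 1 f := by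
  rw [coeff_comp]
  rw [Finset.sum_range_succ, Finset.sum_range_one]
  simp

lemma comp_assoc {v f : PowerSeries ℤ} (hv : coeff 0 v = 0) (hf : coeff 0 f = 0)
    (h : PowerSeries ℤ) : comp (comp h v) f = comp h (comp v f) := by
  have hvf : coeff 0 (comp v f) = 0 := by rw [coeff_zero_comp, hv]
  ext n
  rw [coeff_comp, coeff_comp]
  have rhs : ∀ k, coeff n ((comp v f) ^ k) = coeff n (comp (v ^ k) f) := by
    intro k; rw [comp_pow hf]
  calc ∑ j ∈ Finset.range (n+1), coeff j (comp h v) * coeff n (f ^ j)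
      = ∑ j ∈ Finset.range (n+1), (∑ k ∈ Finset.range (n+1),
          coeff k h * coeff j (v ^ k)) * coeff n (f ^ j) := by
        refine Finset.sum_congr rfl fun j hj => ?_
        rw [coeff_comp]
        congr 1
        refine Finset.sum_subset ?_ ?_
        · intro k hk
          exact mem_range.mpr (by have := mem_range.mp hk; have := mem_range.mp hj; omega)
        · intro k _ hk
          simp only [mem_range, not_lt] at hk
          rw [coeff_pow_zero hv (by omega), mul_zero]
    _ = ∑ k ∈ Finset.range (n+1), coeff k h * ∑ j ∈ Finset.range (n+1),
          coeff j (v ^ k) * coeff n (f ^ j) := by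
        simp_rw [Finset.sum_mul, Finset.mul_sum]
        rw [Finset.sum_comm]
        exact Finset.sum_congr rfl fun k _ => Finset.sum_congr rfl fun j _ => by ring
    _ = ∑ k ∈ Finset.range (n+1), coeff k h * coeff n ((comp v f) ^ k) := by
        refine Finset.sum_congr rfl fun k _ => ?_
        rw [rhs k, coeff_comp]


lemma coeff_shift (h : PowerSeries ℤ) (n : ℕ) : coeff n (shift h) = coeff (n+1) h :=
  coeff_mk _ _

lemma shift_decomp (h : PowerSeries ℤ) : C (coeff 0 h) + X * shift h = h := by
  ext n
  cases n with
  | zero => simp [coeff_shift]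
  | succ n =>
    rw [map_add, coeff_C, if_neg (Nat.succ_ne_zero n), coeff_succ_X_mul, coeff_shift, zero_add]

lemma shift_X_mul (w : PowerSeries ℤ) : shift (X * w) = w := by
  ext n; rw [coeff_shift, coeff_succ_X_mul]

lemma shift_add (h₁ h₂ : PowerSeries ℤ) : shift (h₁ + h₂) = shift h₁ + shift h₂ := by
  ext n; simp [coeff_shift]

lemma shift_C_mul (c : ℤ) (h : PowerSeries ℤ) : shift (C c * h) = C c * shift h := by
  ext n; rw [coeff_shift, coeff_C_mul, coeff_C_mul, coeff_shift]

lemma shift_C (c : ℤ) : shift (C c) = 0 := by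
  ext n; rw [coeff_shift, coeff_C, if_neg (Nat.succ_ne_zero n), map_zero]

lemma shift_one : shift (1 : PowerSeries ℤ) = 0 := by
  ext n; rw [coeff_shift, coeff_one, if_neg (Nat.succ_ne_zero n), map_zero]

lemma comp_zero_left (f : PowerSeries ℤ) : comp 0 f = 0 := by
  ext n; simp [coeff_comp]

lemma coeff_pow_self {f : PowerSeries ℤ} (hf : coeff 0 f = 0) (n : ℕ) :
    coeff n (f ^ n) = (coeff 1 f) ^ n := by
  have hfd : f = X * shift f := by
    conv_lhs => rw [← shift_decomp f]
    rw [hf, map_zero, zero_add]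
  conv_lhs => rw [hfd]
  have h1 : coeff 1 f = coeff 0 (shift f) := by rw [coeff_shift, zero_add]
  rw [mul_pow]
  have h2 : coeff n ((X : PowerSeries ℤ) ^ n * (shift f) ^ n)
      = coeff 0 ((shift f) ^ n) := by
    simpa using coeff_X_pow_mul ((shift f) ^ n) n 0
  rw [h2, h1, coeff_zero_eq_constantCoeff_apply, coeff_zero_eq_constantCoeff_apply, map_pow]


noncomputable def invCoeff (f : PowerSeries ℤ) : ℕ → ℤ
  | n => (if n = 1 then 1 else 0) -
      ∑ k ∈ (Finset.range n).attach,
        invCoeff f k * coeff n (f ^ (k : ℕ))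
  decreasing_by exact Finset.mem_range.mp k.2

lemma invCoeff_def (f : PowerSeries ℤ) (n : ℕ) :
    invCoeff f n = (if n = 1 then 1 else 0) -
      ∑ k ∈ Finset.range n, invCoeff f k * coeff n (f ^ k) := by
  rw [invCoeff, ← Finset.sum_attach (Finset.range n) (fun k => invCoeff f k * coeff n (f ^ k))]

lemma invCoeff_zero (f : PowerSeries ℤ) : invCoeff f 0 = 0 := by
  rw [invCoeff_def]; simp

lemma invCoeff_one (f : PowerSeries ℤ) : invCoeff f 1 = 1 := by
  rw [invCoeff_def]
  simp [invCoeff_zero]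

noncomputable def compInv (f : PowerSeries ℤ) : PowerSeries ℤ := PowerSeries.mk (invCoeff f)

lemma compInv_comp {f : PowerSeries ℤ} (hf0 : coeff 0 f = 0) (hf1 : coeff 1 f = 1) :
    comp (compInv f) f = X := by
  ext n
  rw [coeff_comp, Finset.sum_range_succ]
  have : ∀ k ∈ Finset.range n, coeff k (compInv f) * coeff n (f ^ k)
      = invCoeff f k * coeff n (f ^ k) := fun k _ => by rw [compInv, coeff_mk]
  rw [Finset.sum_congr rfl this, compInv, coeff_mk, coeff_pow_self hf0, hf1, one_pow, mul_one,
    invCoeff_def, coeff_X]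
  ring

lemma coeff_zero_compInv (f : PowerSeries ℤ) : coeff 0 (compInv f) = 0 := by
  rw [compInv, coeff_mk, invCoeff_zero]

lemma coeff_one_compInv (f : PowerSeries ℤ) : coeff 1 (compInv f) = 1 := by
  rw [compInv, coeff_mk, invCoeff_one]

lemma comp_compInv {f : PowerSeries ℤ} (hf0 : coeff 0 f = 0) (hf1 : coeff 1 f = 1) :
    comp f (compInv f) = X := by
  set fi := compInv f with hfi
  have hfi0 : coeff 0 fi = 0 := coeff_zero_compInv f
  have hfi1 : coeff 1 fi = 1 := coeff_one_compInv f
  have h1 : comp fi f = X := compInv_comp hf0 hf1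
  -- left inverse of fi
  have h2 : comp (compInv fi) fi = X := compInv_comp hfi0 hfi1
  have h3 : compInv fi = f := by
    calc compInv fi = comp (compInv fi) X := (comp_X _).symm
      _ = comp (compInv fi) (comp fi f) := by rw [h1]
      _ = comp (comp (compInv fi) fi) f := (comp_assoc hfi0 hf0 _).symm
      _ = comp X f := by rw [h2]
      _ = f := X_comp hf0
  rw [← h3]; exact h2



lemma act_def (a g f b : PowerSeries ℤ) :
    act a g f b = C (coeff 0 b) * a + X * g * comp (shift b) f := rfl

lemma coeff_zero_X_mul (z : PowerSeries ℤ) : coeff 0 (X * z) = 0 := by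
  simp [coeff_zero_eq_constantCoeff_apply]

lemma coeff_zero_act (a g f b : PowerSeries ℤ) :
    coeff 0 (act a g f b) = coeff 0 b * coeff 0 a := by
  rw [act_def, map_add, coeff_C_mul, mul_assoc, coeff_zero_X_mul, add_zero]

lemma shift_act (a g f b : PowerSeries ℤ) :
    shift (act a g f b) = C (coeff 0 b) * shift a + g * comp (shift b) f := by
  rw [act_def, shift_add, shift_C_mul, mul_assoc, shift_X_mul]

lemma act_assoc {v f : PowerSeries ℤ} (hv : coeff 0 v = 0) (hf : coeff 0 f = 0)
    (a g b u c : PowerSeries ℤ) :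
    act (act a g f b) (g * comp u f) (comp v f) c = act a g f (act b u v c) := by
  conv_rhs => rw [act_def]
  rw [coeff_zero_act, shift_act, comp_add, comp_C_mul, comp_mul hf, comp_assoc hv hf,
    map_mul, act_def, act_def]
  ring




lemma coeff_zero_mul' (u v : PowerSeries ℤ) :
    coeff 0 (u * v) = coeff 0 u * coeff 0 v := by
  simp [coeff_zero_eq_constantCoeff_apply]

/-- the almost-Riordan arrays form a group: closure, associativity,
identity `(1,1,x)`, and inverses `(a,g,f)⁻¹ = ((1,−g,f)⁻¹·a, 1/(g∘f̄), f̄)`. -/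
theorem statement7 :
    (∀ t s, isAR t → isAR s → isAR (arMul t s)) ∧
    (∀ t s r, isAR t → isAR s → isAR r →
      arMul (arMul t s) r = arMul t (arMul s r)) ∧
    isAR (1, 1, X) ∧
    (∀ t, isAR t → arMul (1, 1, X) t = t ∧ arMul t (1, 1, X) = t) ∧
    (∀ t, isAR t → ∃ fi gi : PowerSeries ℤ,
      coeff 0 fi = 0 ∧ comp t.2.2 fi = X ∧ comp fi t.2.2 = X ∧
      comp t.2.1 fi * gi = 1 ∧
      isAR (act 1 (-gi) fi t.1, gi, fi) ∧
      arMul t (act 1 (-gi) fi t.1, gi, fi) = (1, 1, X) ∧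
      arMul (act 1 (-gi) fi t.1, gi, fi) t = (1, 1, X)) := by
  refine ⟨?_, ?_, ?_, ?_, ?_⟩
  · -- closure
    rintro ⟨a, g, f⟩ ⟨b, u, v⟩ ⟨ha, hg, hf0, hf1⟩ ⟨hb, hu, hv0, hv1⟩
    refine ⟨?_, ?_, ?_, ?_⟩
    · show coeff 0 (act a g f b) = 1
      rw [coeff_zero_act, hb, ha, mul_one]
    · show coeff 0 (g * comp u f) = 1
      rw [coeff_zero_mul', coeff_zero_comp, hg, hu, mul_one]
    · show coeff 0 (comp v f) = 0
      rw [coeff_zero_comp, hv0]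
    · show coeff 1 (comp v f) = 1
      rw [coeff_one_comp, hv1, hf1, mul_one]
  · -- associativity
    rintro ⟨a, g, f⟩ ⟨b, u, v⟩ ⟨w, p, q⟩ ⟨ha, hg, hf0, hf1⟩ ⟨hb, hu, hv0, hv1⟩ _
    simp only [arMul, Prod.mk.injEq]
    exact ⟨act_assoc hv0 hf0 a g b u w,
      by rw [comp_mul hf0, comp_assoc hv0 hf0, mul_assoc],
      (comp_assoc hv0 hf0 q).symm⟩
  · -- identity is AR
    refine ⟨by simp, by simp, by simp, by simp⟩
  · -- identity laws
    rintro ⟨a, g, f⟩ ⟨ha, hg, hf0, hf1⟩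
    constructor
    · simp only [arMul, Prod.mk.injEq]
      refine ⟨?_, ?_, ?_⟩
      · rw [act_def, comp_X, mul_one, mul_one]
        exact shift_decomp a
      · rw [one_mul, comp_X]
      · rw [comp_X]
    · simp only [arMul, Prod.mk.injEq]
      refine ⟨?_, ?_, ?_⟩
      · rw [act_def]
        rw [show coeff 0 (1 : PowerSeries ℤ) = 1 from by simp, map_one, one_mul,
          shift_one, comp_zero_left, mul_zero, add_zero]
      · rw [comp_one, mul_one]
      · exact X_comp hf0
  · -- inverses
    rintro ⟨a, g, f⟩ ⟨ha, hg, hf0, hf1⟩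
    set fi := compInv f with hfidef
    have hfi0 : coeff 0 fi = 0 := coeff_zero_compInv f
    have hfi1 : coeff 1 fi = 1 := coeff_one_compInv f
    have hfif : comp fi f = X := compInv_comp hf0 hf1
    have hffi : comp f fi = X := comp_compInv hf0 hf1
    have hu0 : constantCoeff (comp g fi) = ((1 : ℤˣ) : ℤ) := by
      rw [← coeff_zero_eq_constantCoeff_apply, coeff_zero_comp, hg]; simp
    set gi := invOfUnit (comp g fi) 1 with hgidef
    have hmul : comp g fi * gi = 1 := mul_invOfUnit (comp g fi) 1 hu0
    have hgi0 : coeff 0 gi = 1 := by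
      rw [coeff_zero_eq_constantCoeff_apply, hgidef, constantCoeff_invOfUnit]; simp
    have hgf : g * comp gi f = 1 := by
      have h1 : comp (comp g fi * gi) f = comp (1 : PowerSeries ℤ) f := by rw [hmul]
      rw [comp_mul hf0, comp_assoc hfi0 hf0, hfif, comp_X, comp_one] at h1
      exact h1
    refine ⟨fi, gi, hfi0, hffi, hfif, hmul, ?_, ?_, ?_⟩
    · -- isAR of the inverse
      refine ⟨?_, hgi0, hfi0, hfi1⟩
      rw [coeff_zero_act, ha]
      simp
    · -- right inverse
      simp only [arMul, Prod.mk.injEq]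
      refine ⟨?_, hgf, hfif⟩
      -- act a g f (act 1 (-gi) fi a) = 1
      have hai0 : coeff 0 (act 1 (-gi) fi a) = 1 := by
        rw [coeff_zero_act, ha]; simp
      have hshai : shift (act 1 (-gi) fi a) = -(gi * comp (shift a) fi) := by
        rw [shift_act, shift_one]
        ring
      rw [act_def, hai0, map_one, one_mul, hshai, comp_neg, comp_mul hf0,
        comp_assoc hfi0 hf0, hfif, comp_X]
      have hd := shift_decomp a
      rw [ha, map_one] at hd
      have hx : X * g * -(comp gi f * shift a) = -((g * comp gi f) * (X * shift a)) := by ring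
      rw [hx, hgf, one_mul]
      linear_combination -hd
    · -- left inverse
      simp only [arMul, Prod.mk.injEq]
      refine ⟨?_, by rw [mul_comm] at hmul; exact hmul, hffi⟩
      rw [act_def, ha, map_one, one_mul, act_def, ha, map_one]
      ring
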